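/- Let (κ_n) and (v_n) be sequences with κ_n ≥ 0 and v_n > 0 for all n, and set d1_n := −κ_n/v_n + v_n/2. Then C_BS(κ_n, v_n) → 0 as n → ∞ if and only if min{d1_n, log v_n} → −∞ as n → ∞. -/

import Mathlib

open MeasureTheory Filter Topology

/-- Standard normal density `φ(z) = e^{-z²/2}/√(2π)`. -/
noncomputable def stdPDF (z : ℝ) : ℝ := Real.exp (-(z^2)/2) / Real.sqrt (2*Real.pi)

/-- Standard normal distribution function `Φ(z) = ∫_{-∞}^z φ(t) dt`. -/
noncomputable def stdCDF (z : ℝ) : ℝ := ∫ t in Set.Iic z, stdPDF t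

/-- Black–Scholes call price `C_BS(κ,v) = Φ(d1) - e^κ Φ(d2)` with
`d1 = -κ/v + v/2`, `d2 = -κ/v - v/2`. -/
noncomputable def CBS (κ v : ℝ) : ℝ :=
  stdCDF (-κ/v + v/2) - Real.exp κ * stdCDF (-κ/v - v/2)

lemma sqrt2pi_pos : 0 < Real.sqrt (2*Real.pi) :=
  Real.sqrt_pos.2 (by positivity)

lemma stdPDF_pos (z : ℝ) : 0 < stdPDF z := by
  unfold stdPDF; positivity

lemma stdPDF_le_exp (z : ℝ) : stdPDF z ≤ Real.exp (z + 1/2) / Real.sqrt (2*Real.pi) := by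
  unfold stdPDF
  gcongr
  nlinarith [sq_nonneg (z + 1)]

lemma integrable_stdPDF : Integrable stdPDF := by
  have h : Integrable (fun x : ℝ => Real.exp (-(1/2) * x ^ 2)) :=
    integrable_exp_neg_mul_sq (by norm_num)
  have := h.div_const (Real.sqrt (2*Real.pi))
  convert this using 2 with x
  unfold stdPDF
  ring_nf

lemma integrable_stdPDF_shift (c : ℝ) : Integrable (fun t => stdPDF (t - c)) :=
  integrable_stdPDF.comp_sub_right c

lemma stdCDF_nonneg (z : ℝ) : 0 ≤ stdCDF z :=
  setIntegral_nonneg measurableSet_Iic (fun t _ => (stdPDF_pos t).le)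

lemma stdCDF_le_exp (z : ℝ) : stdCDF z ≤ Real.exp (z + 1/2) / Real.sqrt (2*Real.pi) := by
  have h1 : stdCDF z ≤ ∫ t in Set.Iic z, Real.exp t * (Real.exp (1/2) / Real.sqrt (2*Real.pi)) := by
    apply setIntegral_mono_on integrable_stdPDF.integrableOn
      ((integrableOn_exp_Iic z).mul_const _) measurableSet_Iic
    intro t _
    calc stdPDF t ≤ Real.exp (t + 1/2) / Real.sqrt (2*Real.pi) := stdPDF_le_exp t
    _ = Real.exp t * (Real.exp (1/2) / Real.sqrt (2*Real.pi)) := by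
        rw [Real.exp_add]; ring
  rw [integral_mul_const, integral_exp_Iic] at h1
  calc stdCDF z ≤ _ := h1
  _ = _ := by rw [Real.exp_add]; ring

-- translation
lemma integral_Iic_stdPDF_shift (a c : ℝ) :
    ∫ t in Set.Iic a, stdPDF (t - c) = stdCDF (a - c) := by
  have hmp : MeasurePreserving (fun x : ℝ => x - c) volume volume :=
    measurePreserving_sub_right volume c
  have hemb : MeasurableEmbedding (fun x : ℝ => x - c) :=
    (MeasurableEquiv.subRight c).measurableEmbedding
  have hs : (fun x : ℝ => x - c) ⁻¹' (Set.Iic (a - c)) = Set.Iic a := by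
    ext x; simp [sub_le_sub_iff_right]
  rw [stdCDF, ← hmp.setIntegral_preimage_emb hemb stdPDF (Set.Iic (a - c)), hs]

lemma exp_mul_stdPDF_shift (κ v t : ℝ) (hv : 0 < v) :
    Real.exp κ * stdPDF (t - v) = stdPDF t * Real.exp (v * (t - (-κ/v + v/2))) := by
  have hv' : v ≠ 0 := hv.ne'
  unfold stdPDF
  rw [mul_div_assoc', ← Real.exp_add, div_mul_eq_mul_div, ← Real.exp_add]
  congr 1
  field_simp
  ring_nf

lemma integrand_eq (κ v : ℝ) (hv : 0 < v) :
    (fun t => stdPDF t - stdPDF t * Real.exp (v * (t - (-κ/v + v/2))))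
      = fun t => stdPDF t - Real.exp κ * stdPDF (t - v) := by
  funext t; rw [exp_mul_stdPDF_shift κ v t hv]

lemma integrable_CBS_integrand (κ v : ℝ) (hv : 0 < v) :
    Integrable (fun t => stdPDF t - stdPDF t * Real.exp (v * (t - (-κ/v + v/2)))) := by
  rw [integrand_eq κ v hv]
  exact integrable_stdPDF.sub ((integrable_stdPDF_shift v).const_mul _)

lemma CBS_repr (κ v : ℝ) (hv : 0 < v) :
    CBS κ v = ∫ t in Set.Iic (-κ/v + v/2),
      (stdPDF t - stdPDF t * Real.exp (v * (t - (-κ/v + v/2)))) := by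
  rw [integrand_eq κ v hv,
    integral_sub integrable_stdPDF.integrableOn
      (((integrable_stdPDF_shift v).const_mul (Real.exp κ)).integrableOn),
    integral_const_mul, integral_Iic_stdPDF_shift, CBS]
  congr 2
  ring

lemma CBS_nonneg (κ v : ℝ) (hv : 0 < v) : 0 ≤ CBS κ v := by
  rw [CBS_repr κ v hv]
  apply setIntegral_nonneg measurableSet_Iic
  intro t ht
  have h1 : Real.exp (v * (t - (-κ/v + v/2))) ≤ 1 := by
    rw [Real.exp_le_one_iff]
    have : t ≤ -κ/v + v/2 := ht
    nlinarith
  nlinarith [stdPDF_pos t]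

lemma CBS_le_stdCDF (κ v : ℝ) : CBS κ v ≤ stdCDF (-κ/v + v/2) := by
  have h := stdCDF_nonneg (-κ/v - v/2)
  have := Real.exp_pos κ
  rw [CBS]
  nlinarith

lemma CBS_le_div (κ v : ℝ) (hκ : 0 ≤ κ) (hv : 0 < v) :
    CBS κ v ≤ v / Real.sqrt (2*Real.pi) := by
  have h1 : CBS κ v ≤ stdCDF (-κ/v + v/2) - stdCDF (-κ/v - v/2) := by
    have h := stdCDF_nonneg (-κ/v - v/2)
    have he : 1 ≤ Real.exp κ := Real.one_le_exp hκ
    rw [CBS]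
    nlinarith
  have h2 : stdCDF (-κ/v + v/2) - stdCDF (-κ/v - v/2)
      = ∫ t in (-κ/v - v/2)..(-κ/v + v/2), stdPDF t :=
    intervalIntegral.integral_Iic_sub_Iic integrable_stdPDF.integrableOn integrable_stdPDF.integrableOn
  have h3 : ‖∫ t in (-κ/v - v/2)..(-κ/v + v/2), stdPDF t‖
      ≤ (Real.sqrt (2*Real.pi))⁻¹ * |(-κ/v + v/2) - (-κ/v - v/2)| := by
    apply intervalIntegral.norm_integral_le_of_norm_le_const
    intro t _
    rw [Real.norm_eq_abs, abs_of_pos (stdPDF_pos t)]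
    unfold stdPDF
    rw [div_eq_mul_inv]
    have : Real.exp (-(t^2)/2) ≤ 1 := Real.exp_le_one_iff.2 (by nlinarith [sq_nonneg t])
    nlinarith [inv_pos.2 sqrt2pi_pos]
  have h4 : |(-κ/v + v/2) - (-κ/v - v/2)| = v := by
    rw [show (-κ/v + v/2) - (-κ/v - v/2) = v by ring, abs_of_pos hv]
  rw [h4] at h3
  calc CBS κ v ≤ _ := h1
    _ ≤ ‖∫ t in (-κ/v - v/2)..(-κ/v + v/2), stdPDF t‖ := h2 ▸ Real.le_norm_self _
    _ ≤ (Real.sqrt (2*Real.pi))⁻¹ * v := h3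
    _ = v / Real.sqrt (2*Real.pi) := by ring

lemma CBS_lower (b κ v : ℝ) (hv : 0 < v) (hd1 : b ≤ -κ/v + v/2) (hvb : Real.exp b ≤ v) :
    (1 - Real.exp (-Real.exp b)) * stdPDF (|b| + 2) ≤ CBS κ v := by
  set d1 := -κ/v + v/2 with hd1def
  have hsub : Set.Ioc (b-2) (b-1) ⊆ Set.Iic d1 := fun t ht =>
    le_trans ht.2 (by linarith)
  have hint := (integrable_CBS_integrand κ v hv).integrableOn (s := Set.Iic d1)
  have hb1 : -|b| ≤ b := neg_abs_le b
  have hb2 : b ≤ |b| := le_abs_self b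
  have hptw : ∀ t ∈ Set.Ioc (b-2) (b-1),
      (1 - Real.exp (-Real.exp b)) * stdPDF (|b| + 2)
        ≤ stdPDF t - stdPDF t * Real.exp (v * (t - d1)) := by
    intro t ht
    have ht1 : b - 2 < t := ht.1
    have ht2 : t ≤ b - 1 := ht.2
    have hpdf : stdPDF (|b| + 2) ≤ stdPDF t := by
      unfold stdPDF
      rw [div_eq_mul_inv, div_eq_mul_inv]
      have hm : Real.exp (-((|b|+2)^2)/2) ≤ Real.exp (-(t^2)/2) := by
        rw [Real.exp_le_exp]; nlinarith
      exact mul_le_mul_of_nonneg_right hm (inv_nonneg.2 sqrt2pi_pos.le)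
    have hexp : Real.exp (v * (t - d1)) ≤ Real.exp (-Real.exp b) := by
      rw [Real.exp_le_exp]
      nlinarith
    have hE : Real.exp (-Real.exp b) < 1 :=
      Real.exp_lt_one_iff.2 (by nlinarith [Real.exp_pos b])
    nlinarith [stdPDF_pos t, stdPDF_pos (|b| + 2), Real.exp_pos (v * (t - d1))]
  calc (1 - Real.exp (-Real.exp b)) * stdPDF (|b| + 2)
      = ((1 - Real.exp (-Real.exp b)) * stdPDF (|b| + 2))
          * (volume (Set.Ioc (b-2) (b-1))).toReal := by
        rw [Real.volume_Ioc]
        norm_num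
    _ ≤ ∫ t in Set.Ioc (b-2) (b-1), (stdPDF t - stdPDF t * Real.exp (v * (t - d1))) :=
        setIntegral_ge_of_const_le_real measurableSet_Ioc measure_Ioc_lt_top.ne hptw
          (hint.mono_set hsub)
    _ ≤ ∫ t in Set.Iic d1, (stdPDF t - stdPDF t * Real.exp (v * (t - d1))) := by
        apply setIntegral_mono_set hint
        · filter_upwards [ae_restrict_mem measurableSet_Iic] with t ht
          show 0 ≤ stdPDF t - stdPDF t * Real.exp (v * (t - d1))
          have h1 : Real.exp (v * (t - d1)) ≤ 1 := by
            rw [Real.exp_le_one_iff]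
            have : t ≤ d1 := ht
            nlinarith
          nlinarith [stdPDF_pos t]
        · exact hsub.eventuallyLE
    _ = CBS κ v := (CBS_repr κ v hv).symm

/-- **Vanishing of the Black–Scholes price.** For `κ n ≥ 0` and `v n > 0`, with
`d1_n = -κ n/v n + v n/2`, one has `C_BS(κ n, v n) → 0` if and only if
`min (d1_n) (log (v n)) → -∞`. -/
theorem CBS_tendsto_zero_iff
    (κ v : ℕ → ℝ) (hκ : ∀ n, 0 ≤ κ n) (hv : ∀ n, 0 < v n) :
    Tendsto (fun n => CBS (κ n) (v n)) atTop (𝓝 0) ↔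
    Tendsto (fun n => min (-(κ n) / v n + v n / 2) (Real.log (v n))) atTop atBot := by
  constructor
  · -- CBS → 0 ⇒ min → -∞
    intro h
    rw [tendsto_atBot]
    intro b
    by_contra hb
    rw [not_eventually] at hb
    set c := (1 - Real.exp (-Real.exp b)) * stdPDF (|b| + 2) with hc_def
    have hc : 0 < c := by
      apply mul_pos _ (stdPDF_pos _)
      have : Real.exp (-Real.exp b) < 1 := by
        rw [Real.exp_lt_one_iff]
        exact neg_neg_iff_pos.2 (Real.exp_pos b)
      linarith
    have hev : ∀ᶠ n in atTop, CBS (κ n) (v n) < c :=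
      h.eventually_lt_const hc
    obtain ⟨n, hn1, hn2⟩ := (hb.and_eventually hev).exists
    rw [not_le, lt_min_iff] at hn1
    have hvb : Real.exp b ≤ v n := by
      have h2 := (Real.exp_lt_exp.2 hn1.2).le
      rwa [Real.exp_log (hv n)] at h2
    exact absurd (CBS_lower b (κ n) (v n) (hv n) hn1.1.le hvb) (by linarith)
  · -- min → -∞ ⇒ CBS → 0
    intro h
    set K := Real.exp (1/2) / Real.sqrt (2*Real.pi) with hK
    have hbound : ∀ n, CBS (κ n) (v n)
        ≤ K * Real.exp (min (-(κ n) / v n + v n / 2) (Real.log (v n))) := by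
      intro n
      rcases min_cases (-(κ n) / v n + v n / 2) (Real.log (v n)) with ⟨hm, _⟩ | ⟨hm, _⟩
      · rw [hm]
        calc CBS (κ n) (v n) ≤ stdCDF (-(κ n) / v n + v n / 2) := CBS_le_stdCDF _ _
          _ ≤ Real.exp ((-(κ n) / v n + v n / 2) + 1/2) / Real.sqrt (2*Real.pi) :=
              stdCDF_le_exp _
          _ = K * Real.exp (-(κ n) / v n + v n / 2) := by
              rw [Real.exp_add]; ring
      · rw [hm, Real.exp_log (hv n)]
        calc CBS (κ n) (v n) ≤ v n / Real.sqrt (2*Real.pi) := CBS_le_div _ _ (hκ n) (hv n)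
          _ ≤ K * v n := by
              rw [hK, div_mul_eq_mul_div, div_eq_mul_inv, div_eq_mul_inv]
              have h1 : (1:ℝ) ≤ Real.exp (1/2) := Real.one_le_exp (by norm_num)
              nlinarith [mul_nonneg (mul_nonneg (sub_nonneg.2 h1) (hv n).le)
                (inv_nonneg.2 sqrt2pi_pos.le)]
    have hzero : Tendsto (fun n => K * Real.exp
        (min (-(κ n) / v n + v n / 2) (Real.log (v n)))) atTop (𝓝 0) := by
      have := (Real.tendsto_exp_atBot.comp h).const_mul K
      simpa using this
    exact squeeze_zero (fun n => CBS_nonneg (κ n) (v n) (hv n)) hbound hzero
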